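/- A rational polyhedral cone in Z^n (the set of lattice points in a cone generated over R_{≥0} by finitely many lattice vectors, intersected with Z^n) is finitely generated as a monoid (Gordan's Lemma). -/

import Mathlib

/-- Gordan's Lemma: the set of lattice points of a rational polyhedral cone
(generated over `ℝ≥0` by lattice vectors `v₁,…,v_k`) is a finitely generated
monoid; moreover generators can be taken among the lattice points of the
fundamental parallelepiped `{∑ λᵢ vᵢ : 0 ≤ λᵢ ≤ 1}`. -/
theorem stmt_8 (n k : ℕ) (v : Fin k → (Fin n → ℤ)) :
    ∃ S : Finset (Fin n → ℤ),
      (∀ s ∈ S, ∃ l : Fin k → ℝ, (∀ i, 0 ≤ l i ∧ l i ≤ 1) ∧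
        (fun j => (s j : ℝ)) = ∑ i, l i • (fun j => ((v i j : ℝ)))) ∧
      (AddSubmonoid.closure (S : Set (Fin n → ℤ)) : Set (Fin n → ℤ)) =
        {x : Fin n → ℤ | ∃ l : Fin k → ℝ, (∀ i, 0 ≤ l i) ∧
          (fun j => (x j : ℝ)) = ∑ i, l i • (fun j => ((v i j : ℝ)))} := by
  classical
  set V : Fin k → (Fin n → ℝ) := fun i j => (v i j : ℝ) with hV
  set P : Set (Fin n → ℤ) :=
    {s | ∃ l : Fin k → ℝ, (∀ i, 0 ≤ l i ∧ l i ≤ 1) ∧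
      (fun j => (s j : ℝ)) = ∑ i, l i • V i} with hP
  -- a useful pointwise reformulation
  have hpt : ∀ (s : Fin n → ℤ) (l : Fin k → ℝ),
      ((fun j => (s j : ℝ)) = ∑ i, l i • V i) ↔
      (∀ j, (s j : ℝ) = ∑ i, l i * (v i j : ℝ)) := by
    intro s l
    constructor
    · intro h j
      have := congrFun h j
      simpa [Finset.sum_apply, hV] using this
    · intro h
      funext j
      simpa [Finset.sum_apply, hV] using h j
  -- finiteness of P
  have hPfin : P.Finite := by
    set B : Fin n → ℤ := fun j => ∑ i, |v i j| with hB
    have hsub : P ⊆ Set.pi Set.univ (fun j => Set.Icc (-B j) (B j)) := by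
      rintro s ⟨l, hl, hs⟩ j -
      have hsj : (s j : ℝ) = ∑ i, l i * (v i j : ℝ) := (hpt s l).1 hs j
      have habs : |(s j : ℝ)| ≤ (B j : ℝ) := by
        rw [hsj, hB]
        push_cast
        calc |∑ i, l i * (v i j : ℝ)| ≤ ∑ i, |l i * (v i j : ℝ)| :=
              Finset.abs_sum_le_sum_abs _ _
          _ ≤ ∑ i, |(v i j : ℝ)| := by
              apply Finset.sum_le_sum
              intro i _
              rw [abs_mul]
              have h1 : |l i| ≤ 1 := abs_le.mpr ⟨by linarith [(hl i).1], (hl i).2⟩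
              nlinarith [abs_nonneg ((v i j : ℝ))]
      have : |s j| ≤ B j := by exact_mod_cast (by push_cast; exact habs : ((|s j| : ℤ) : ℝ) ≤ (B j : ℝ))
      exact Set.mem_Icc.mpr (abs_le.mp this)
    exact Set.Finite.subset (Set.Finite.pi fun j => Set.finite_Icc _ _) hsub
  refine ⟨hPfin.toFinset, ?_, ?_⟩
  · intro s hs
    rw [Set.Finite.mem_toFinset] at hs
    exact hs
  · ext x
    simp only [SetLike.mem_coe, Set.mem_setOf_eq]
    constructor
    · intro hx
      induction hx using AddSubmonoid.closure_induction with
      | mem s hs =>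
          rw [Set.Finite.coe_toFinset, hP] at hs
          obtain ⟨l, hl, hsum⟩ := hs
          exact ⟨l, fun i => (hl i).1, hsum⟩
      | zero =>
          refine ⟨0, fun i => le_refl 0, ?_⟩
          rw [hpt]
          intro j
          simp
      | add a b _ _ ha hb =>
          obtain ⟨l, hl, hla⟩ := ha
          obtain ⟨l', hl', hlb⟩ := hb
          refine ⟨l + l', fun i => add_nonneg (hl i) (hl' i), ?_⟩
          rw [hpt] at hla hlb ⊢
          intro j
          simp only [Pi.add_apply]
          rw [Finset.sum_congr rfl (fun i _ => add_mul (l i) (l' i) ((v i j : ℝ))),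
            Finset.sum_add_distrib]
          push_cast
          linarith [hla j, hlb j]
    · rintro ⟨l, hl, hx⟩
      rw [hpt] at hx
      -- v i ∈ P for each i
      have hvP : ∀ i, v i ∈ P := by
        intro i
        refine ⟨fun i' => if i' = i then 1 else 0, ?_, ?_⟩
        · intro i'; by_cases h : i' = i <;> simp [h]
        · rw [hpt]
          intro j
          simp [Finset.sum_ite_eq']
      set m : Fin k → ℕ := fun i => (⌊l i⌋).toNat with hm
      have hmcast : ∀ i, ((m i : ℤ) : ℝ) = (⌊l i⌋ : ℝ) := by
        intro i
        have : 0 ≤ ⌊l i⌋ := Int.floor_nonneg.mpr (hl i)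
        rw [hm]
        push_cast [Int.toNat_of_nonneg this]
        rfl
      set r : Fin n → ℤ := x - ∑ i, (m i : ℤ) • v i with hr
      have hrP : r ∈ P := by
        refine ⟨fun i => Int.fract (l i), ?_, ?_⟩
        · intro i
          exact ⟨Int.fract_nonneg _, le_of_lt (Int.fract_lt_one _)⟩
        · rw [hpt]
          intro j
          have hxj := hx j
          have hrj : (r j : ℝ) = (x j : ℝ) - ∑ i, ((m i : ℤ) : ℝ) * (v i j : ℝ) := by
            rw [hr]
            push_cast [Finset.sum_apply]
            ring_nf
            simp [Finset.sum_apply]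
            exact Finset.sum_congr rfl fun i _ => mul_comm _ _
          rw [hrj, hxj, ← Finset.sum_sub_distrib]
          apply Finset.sum_congr rfl
          intro i _
          rw [hmcast i, Int.fract]
          ring
      have hxeq : x = (∑ i, (m i : ℤ) • v i) + r := by
        rw [hr]; ring
      rw [hxeq]
      have hcongr : (∑ i, (m i : ℤ) • v i) = ∑ i, (m i) • v i :=
        Finset.sum_congr rfl fun i _ => natCast_zsmul (v i) (m i)
      rw [hcongr]
      apply AddSubmonoid.add_mem
      · exact AddSubmonoid.sum_mem _ fun i _ => nsmul_mem
          (AddSubmonoid.subset_closure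
            (Finset.mem_coe.mpr (hPfin.mem_toFinset.mpr (hvP i)))) (m i)
      · exact AddSubmonoid.subset_closure
          (Finset.mem_coe.mpr (hPfin.mem_toFinset.mpr hrP))
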